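/- (Local finiteness) Let 𝓑 be a simple expansion set over X. Suppose that for each vertex w of 𝓑 there are only finitely many b ∈ 𝓑 with |ℰ(b)| = 2 and Bas(b) = w. Then Δ^f_𝓑 is locally finite: every full-support vertex v spans a 1-simplex with only finitely many full-support vertices. -/
import Mathlib


structure SimpleExpansionSet (B : Type*) (X : Type*) where
  supp : B → Set X
  supp_nonempty : ∀ b, (supp b).Nonempty
  E : B → Set (Finset B)
  self_mem : ∀ b, ({b} : Finset B) ∈ E b
  proper_unique : ∀ b : B, ∀ u ∈ E b, ∀ w ∈ E b, u ≠ {b} → w ≠ {b} → u = w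
  proper_disjoint : ∀ b : B, ∀ v ∈ E b, v ≠ {b} →
    ∀ b₁ ∈ v, ∀ b₂ ∈ v, b₁ ≠ b₂ → Disjoint (supp b₁) (supp b₂)
  proper_supp : ∀ b : B, ∀ v ∈ E b, v ≠ {b} → (⋃ b' ∈ v, supp b') = supp b
  proper_card : ∀ b : B, ∀ v ∈ E b, v ≠ {b} → 2 ≤ v.card

namespace SimpleExpansionSet

variable {B X : Type*}

/-- A vertex: a finite subset of `𝓑` whose members have pairwise disjoint supports. -/
def IsVertex (S : SimpleExpansionSet B X) (v : Finset B) : Prop :=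
  ∀ b₁ ∈ v, ∀ b₂ ∈ v, b₁ ≠ b₂ → Disjoint (S.supp b₁) (S.supp b₂)

/-- The support of a vertex. -/
def vsupp (S : SimpleExpansionSet B X) (v : Finset B) : Set X :=
  ⋃ b ∈ v, S.supp b

/-- `|ℰ(b)| = 2`, i.e. `b` admits a proper expansion. -/
def HasExpansion (S : SimpleExpansionSet B X) (b : B) : Prop :=
  ∃ u ∈ S.E b, u ≠ {b}

/-- The contraction basin of `b`: the unique member of `ℰ(b) - {{b}}` (when it exists). -/
noncomputable def Bas (S : SimpleExpansionSet B X) (b : B) : Finset B :=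
  @dite _ (S.HasExpansion b) (Classical.propDecidable _) (fun h => h.choose) (fun _ => {b})

/-- The restriction `r_b(u) = {b' ∈ u : supp b' ⊆ supp b}`. -/
noncomputable def restrict (S : SimpleExpansionSet B X) (b : B) (u : Finset B) : Finset B :=
  @Finset.filter _ (fun b' => S.supp b' ⊆ S.supp b) (Classical.decPred _) u

/-- The partial order on `ℰ(b)`: `{b}` is below everything. -/
def Eleq (b : B) (u w : Finset B) : Prop := u = w ∨ u = {b}

/-- The cube `𝒞(v₁, v₂)`, as a set of vertices. -/
noncomputable def cube [DecidableEq B] (S : SimpleExpansionSet B X) (v₁ v₂ : Finset B) :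
    Set (Finset B) :=
  { u | ∃ w ⊆ v₂, u = (v₁ \ v₂) ∪ (v₂ \ w) ∪ w.biUnion S.Bas }

/-- One expansion step: replace `b ∈ u` by its contraction basin. -/
def Step [DecidableEq B] (S : SimpleExpansionSet B X) (u v : Finset B) : Prop :=
  ∃ b ∈ u, S.HasExpansion b ∧ v = u.erase b ∪ S.Bas b

/-- The ascending-path relation `⪯`. -/
def Prec [DecidableEq B] (S : SimpleExpansionSet B X) : Finset B → Finset B → Prop :=
  Relation.ReflTransGen (S.Step)

/-- `u` is joined to `v` by a cubical edge with basin `Bsn` (relative to `v`). -/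
def BasinOf [DecidableEq B] (S : SimpleExpansionSet B X) (v u Bsn : Finset B) : Prop :=
  (∃ b ∈ v, S.HasExpansion b ∧ u = v.erase b ∪ S.Bas b ∧ Bsn = {b}) ∨
  (∃ b ∈ u, S.HasExpansion b ∧ v = u.erase b ∪ S.Bas b ∧ Bsn = S.Bas b)

end SimpleExpansionSet

open SimpleExpansionSet


lemma bas_eq {B X : Type*} {S : SimpleExpansionSet B X} {b : B} {w : Finset B}
    (hw : w ∈ S.E b) (hne : w ≠ {b}) : S.Bas b = w := by
  have h : S.HasExpansion b := ⟨w, hw, hne⟩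
  unfold SimpleExpansionSet.Bas
  rw [dif_pos h]
  exact S.proper_unique b _ h.choose_spec.1 _ hw h.choose_spec.2 hne

/-- Local finiteness: if every vertex is the contraction basin of only
finitely many `b ∈ 𝓑`, then `Δ^f_𝓑` is locally finite. -/
theorem locally_finite {B X : Type*} [DecidableEq B] (S : SimpleExpansionSet B X)
    (hfin : ∀ w : Finset B, S.IsVertex w →
      {b : B | S.HasExpansion b ∧ S.Bas b = w}.Finite) :
    ∀ v : Finset B, S.IsVertex v → S.vsupp v = Set.univ →
      {u : Finset B | S.IsVertex u ∧ S.vsupp u = Set.univ ∧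
        ((v.card < u.card ∧ ∀ b ∈ v, S.restrict b u ∈ S.E b) ∨
         (u.card < v.card ∧ ∀ b ∈ u, S.restrict b v ∈ S.E b))}.Finite := by
  classical
  intro v hv hvs
  set T : Set B := ↑v ∪ ↑(v.biUnion S.Bas) ∪
      ⋃ w ∈ v.powerset, {b : B | S.HasExpansion b ∧ S.Bas b = w} with hTdef
  have hT : T.Finite := by
    refine (Set.Finite.union (Set.Finite.union v.finite_toSet
      (v.biUnion S.Bas).finite_toSet) ?_)
    refine Set.Finite.biUnion (v.powerset.finite_toSet) ?_
    intro w hw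
    exact hfin w (fun b₁ h1 b₂ h2 hne =>
      hv b₁ (Finset.mem_powerset.mp hw h1) b₂ (Finset.mem_powerset.mp hw h2) hne)
  refine Set.Finite.subset (hT.toFinset.powerset.finite_toSet) ?_
  rintro u ⟨hu, hus, hcase⟩
  simp only [Finset.coe_powerset, Set.mem_preimage, Set.mem_powerset_iff,
    Set.Finite.coe_toFinset]
  intro b' hb'
  have hb'u : b' ∈ u := hb'
  rcases hcase with ⟨_, hE⟩ | ⟨_, hE⟩
  · -- expansion case: every b' ∈ u lies in some restrict b u, b ∈ v
    obtain ⟨x, hx⟩ := S.supp_nonempty b'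
    have hxv : x ∈ S.vsupp v := hvs ▸ Set.mem_univ x
    obtain ⟨b, hbv, hxb⟩ := Set.mem_iUnion₂.mp hxv
    have hEb := hE b hbv
    have key : ∃ c ∈ S.restrict b u, x ∈ S.supp c := by
      by_cases h : S.restrict b u = {b}
      · exact ⟨b, by rw [h]; exact Finset.mem_singleton_self b, hxb⟩
      · have := S.proper_supp b _ hEb h
        have : x ∈ ⋃ c ∈ S.restrict b u, S.supp c := this ▸ hxb
        simpa using Set.mem_iUnion₂.mp this
    obtain ⟨c, hc, hxc⟩ := key
    have hcu : c ∈ u := Finset.mem_filter.mp hc |>.1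
    have hcb' : c = b' := by
      by_contra hne
      exact (hu c hcu b' hb'u hne).ne_of_mem hxc hx rfl
    subst hcb'
    by_cases h : S.restrict b u = {b}
    · have : c = b := Finset.mem_singleton.mp (h ▸ hc)
      exact Or.inl (Or.inl (this ▸ hbv))
    · have hBas : S.Bas b = S.restrict b u := bas_eq hEb h
      refine Or.inl (Or.inr ?_)
      simp only [Finset.coe_biUnion, Set.mem_iUnion]
      exact ⟨b, hbv, by rw [hBas]; exact hc⟩
  · -- contraction case
    have hEb' := hE b' hb'u
    by_cases h : S.restrict b' v = {b'}
    · have : b' ∈ S.restrict b' v := by rw [h]; exact Finset.mem_singleton_self b'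
      exact Or.inl (Or.inl (Finset.mem_filter.mp this |>.1))
    · have hBas : S.Bas b' = S.restrict b' v := bas_eq hEb' h
      refine Or.inr ?_
      refine Set.mem_iUnion₂.mpr ⟨S.restrict b' v, ?_, ⟨⟨_, hEb', h⟩, hBas⟩⟩
      exact Finset.mem_powerset.mpr (Finset.filter_subset _ v)
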